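/- Let d ≥ 1, m₀ > 0, α > 0, λ > 0, and let r be a Borel probability measure on ℝ with r({0}) = 0 and finite fourth absolute moment, so that r_4 = ∫_ℝ s⁴ dr(s) > 0. Then there exists a real-valued Schwartz function f on ℝ^d such that the truncated four-point Schwinger function S_4^T(f, f, f, f) = λ·r_4·∫_{ℝ^d} ((G*f)(y))⁴ dy is strictly positive. In particular, the truncated four-point function of the convoluted generalized white noise model does not vanish identically when λ > 0. -/

import Mathlib

open MeasureTheory Filter Topology

/-- The convoluted test function `G*f`, defined as the inverse Fourier transform of the
product of the multiplier `k ↦ (‖k‖² + m₀²)^(−α)` with the Fourier transform of `f`. -/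
noncomputable def Gconv (d : ℕ) (m0 α : ℝ)
    (f : SchwartzMap (EuclideanSpace ℝ (Fin d)) ℂ) :
    EuclideanSpace ℝ (Fin d) → ℂ :=
  FourierTransformInv.fourierInv
    (fun k => (((‖k‖ ^ 2 + m0 ^ 2) ^ (-α) : ℝ) : ℂ) *
      FourierTransform.fourier (fun x => f x) k)

open scoped ContDiff RealInnerProductSpace FourierTransform ComplexConjugate

/-- A smooth compactly supported function is a Schwartz function. -/
noncomputable def mySchwartzOfCompactSupport
    {E F : Type*} [NormedAddCommGroup E] [NormedSpace ℝ E]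
    [NormedAddCommGroup F] [NormedSpace ℝ F]
    (f : E → F) (h1 : ContDiff ℝ ∞ f) (h2 : HasCompactSupport f) :
    SchwartzMap E F where
  toFun := f
  smooth' := h1
  decay' := by
    intro k n
    have hc : Continuous fun x => ‖x‖ ^ k * ‖iteratedFDeriv ℝ n f x‖ :=
      (continuous_norm.pow k).mul (h1.continuous_iteratedFDeriv (by exact_mod_cast le_top)).norm
    have hsupp : HasCompactSupport fun x => ‖x‖ ^ k * ‖iteratedFDeriv ℝ n f x‖ :=
      ((h2.iteratedFDeriv n).norm).mul_left
    obtain ⟨C, hC⟩ := hc.bounded_above_of_compact_support hsupp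
    exact ⟨C, fun x => by simpa using hC x⟩

@[simp] lemma mySchwartzOfCompactSupport_coe
    {E F : Type*} [NormedAddCommGroup E] [NormedSpace ℝ E]
    [NormedAddCommGroup F] [NormedSpace ℝ F]
    (f : E → F) (h1 : ContDiff ℝ ∞ f) (h2 : HasCompactSupport f) :
    ⇑(mySchwartzOfCompactSupport f h1 h2) = f := rfl

theorem truncated_four_point_function_nonvanishing
    (d : ℕ) (hd : 1 ≤ d) (m0 α lam : ℝ) (hm : 0 < m0) (hα : 0 < α)
    (hlam : 0 < lam)
    (r : Measure ℝ) [IsProbabilityMeasure r] (hr0 : r {0} = 0)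
    (hmom4 : Integrable (fun s : ℝ => |s| ^ 4) r) :
    ∃ f : SchwartzMap (EuclideanSpace ℝ (Fin d)) ℂ,
      (∀ x, (f x).im = 0) ∧
      Integrable (fun y => (Gconv d m0 α f y).re ^ 4) ∧
      0 < lam * (∫ s : ℝ, s ^ 4 ∂r) * ∫ y, (Gconv d m0 α f y).re ^ 4 := by
  classical
  -- the fourth moment is positive
  have hs4 : Integrable (fun s : ℝ => s ^ 4) r := by
    have : (fun s : ℝ => |s| ^ 4) = fun s : ℝ => s ^ 4 := by
      funext s; rw [pow_abs, abs_of_nonneg (by positivity)]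
    rwa [this] at hmom4
  have hr4 : 0 < ∫ s, s ^ 4 ∂r := by
    rw [integral_pos_iff_support_of_nonneg (fun s => by positivity) hs4]
    have hsupp : Function.support (fun s : ℝ => s ^ 4) = {(0 : ℝ)}ᶜ := by
      ext s; simp [Function.mem_support, pow_eq_zero_iff]
    have hco : r {(0 : ℝ)}ᶜ = 1 := by
      rw [measure_compl (measurableSet_singleton 0) (measure_ne_top r _), hr0, measure_univ]
      simp
    rw [hsupp, hco]
    norm_num
  -- set up bump, multiplier
  set E := EuclideanSpace ℝ (Fin d)
  let φ : ContDiffBump (0 : E) := ⟨1, 2, one_pos, one_lt_two⟩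
  set m : E → ℝ := fun k => (‖k‖ ^ 2 + m0 ^ 2) ^ (-α) with hm_def
  have hmpos : ∀ k, 0 < m k := fun k => Real.rpow_pos_of_pos (by positivity) _
  have hmsmooth : ContDiff ℝ ∞ m := by
    rw [contDiff_iff_contDiffAt]
    intro x
    exact (((contDiff_norm_sq ℝ (E := E)).add contDiff_const).contDiffAt).rpow_const_of_ne
      (by positivity)
  set w : E → ℂ := fun k => ((φ k : ℝ) : ℂ) with hw_def
  have hwsmooth : ContDiff ℝ ∞ w := Complex.ofRealCLM.contDiff.comp φ.contDiff
  have hwsupp : HasCompactSupport w :=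
    φ.hasCompactSupport.comp_left (g := fun t : ℝ => (t : ℂ)) Complex.ofReal_zero
  set g : E → ℂ := fun k => ((m k : ℝ) : ℂ) * w k with hg_def
  have hgsmooth : ContDiff ℝ ∞ g :=
    (Complex.ofRealCLM.contDiff.comp hmsmooth).mul hwsmooth
  have hgsupp : HasCompactSupport g := hwsupp.mul_left
  let W0 : SchwartzMap E ℂ := mySchwartzOfCompactSupport w hwsmooth hwsupp
  let W : SchwartzMap E ℂ := mySchwartzOfCompactSupport g hgsmooth hgsupp
  let f : SchwartzMap E ℂ := (SchwartzMap.fourierTransformCLE ℂ (SchwartzMap E ℂ)).symm W0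
  let h : SchwartzMap E ℂ := (SchwartzMap.fourierTransformCLE ℂ (SchwartzMap E ℂ)).symm W
  have hf_coe : ⇑f = 𝓕⁻ w := by
    show ⇑(𝓕⁻ W0 : SchwartzMap E ℂ) = _; rw [SchwartzMap.fourierInv_coe]; rfl
  have hh_coe : ⇑h = 𝓕⁻ g := by
    show ⇑(𝓕⁻ W : SchwartzMap E ℂ) = _; rw [SchwartzMap.fourierInv_coe]; rfl
  -- Fourier transform of f is w
  have hFf : 𝓕 ⇑f = w := by
    have h1 : SchwartzMap.fourierTransformCLE ℂ (SchwartzMap E ℂ) f = W0 :=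
      (SchwartzMap.fourierTransformCLE ℂ (SchwartzMap E ℂ)).apply_symm_apply W0
    have h2 : ⇑(SchwartzMap.fourierTransformCLE ℂ (SchwartzMap E ℂ) f) = 𝓕 ⇑f := by
      exact SchwartzMap.fourier_coe f
    rw [← h2, h1]; rfl
  -- Gconv f = h
  have hGconv : Gconv d m0 α f = ⇑h := by
    unfold Gconv
    have hfun : (fun k : E => (((‖k‖ ^ 2 + m0 ^ 2) ^ (-α) : ℝ) : ℂ) *
        FourierTransform.fourier (fun x => f x) k) = g := by
      funext k
      have : FourierTransform.fourier (fun x => f x) k = w k := congrFun hFf k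
      rw [this]
    rw [hfun, hh_coe]
  refine ⟨f, ?_, ?_, ?_⟩
  · -- realness of f
    intro x
    rw [← Complex.conj_eq_iff_im, congrFun hf_coe x, Real.fourierInv_eq',
      ← integral_conj]
    have key : ∀ v : E,
        (starRingEnd ℂ) (Complex.exp ((↑(2 * Real.pi * (inner ℝ v x : ℝ)) : ℂ) * Complex.I) • w v)
          = Complex.exp ((↑(2 * Real.pi * (inner ℝ (-v) x : ℝ)) : ℂ) * Complex.I) • w (-v) := by
      intro v
      simp only [hw_def, smul_eq_mul]
      rw [φ.neg, map_mul, Complex.conj_ofReal, ← Complex.exp_conj]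
      congr 2
      simp only [map_mul, Complex.conj_ofReal, Complex.conj_I, inner_neg_left]
      push_cast
      ring
    simp_rw [key]
    exact integral_neg_eq_self
      (fun v : E => Complex.exp ((↑(2 * Real.pi * (inner ℝ v x : ℝ)) : ℂ) * Complex.I) • w v) volume
  · -- integrability of the fourth power of the real part
    rw [hGconv]
    obtain ⟨C, hC0, hC⟩ := h.decay 0 0
    have hbound : ∀ y, ‖h y‖ ≤ C := by
      intro y
      have := hC y
      simpa [norm_iteratedFDeriv_zero] using this
    apply Integrable.mono' ((h.integrable.norm).const_mul (C ^ 3))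
    · exact ((Complex.continuous_re.comp h.continuous).pow 4).aestronglyMeasurable
    · filter_upwards with y
      have h1 : |(h y).re| ≤ ‖h y‖ := Complex.abs_re_le_norm _
      calc ‖(h y).re ^ 4‖ = |(h y).re| ^ 4 := by
            rw [Real.norm_eq_abs, abs_pow]
        _ ≤ ‖h y‖ ^ 4 := pow_le_pow_left₀ (abs_nonneg _) h1 4
        _ = ‖h y‖ ^ 3 * ‖h y‖ := by ring
        _ ≤ C ^ 3 * ‖h y‖ :=
            mul_le_mul_of_nonneg_right (pow_le_pow_left₀ (norm_nonneg _) (hbound y) 3)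
              (norm_nonneg _)
  · -- positivity
    have hGint : Integrable g := W.integrable
    have h0 : h 0 = ∫ v, g v := by
      rw [congrFun hh_coe 0, Real.fourierInv_eq']
      simp [smul_eq_mul]
    have hre : ∀ v, (g v).re = m v * φ v := by
      intro v
      simp [hg_def, hw_def, ← Complex.ofReal_mul]
    have hre0 : (h 0).re = ∫ v, m v * φ v := by
      rw [h0]
      have := integral_re (μ := (volume : Measure E)) (f := g) hGint
      simp only [RCLike.re_to_complex] at this
      rw [← this]
      exact integral_congr_ae (Filter.Eventually.of_forall fun v => hre v)
    have hintmφ : Integrable fun v => m v * φ v :=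
      Continuous.integrable_of_hasCompactSupport (hmsmooth.continuous.mul φ.continuous)
        (φ.hasCompactSupport.mul_left)
    have hpos0 : 0 < (h 0).re := by
      rw [hre0]
      rw [integral_pos_iff_support_of_nonneg
        (fun v => mul_nonneg (hmpos v).le φ.nonneg) hintmφ]
      have hb : Metric.ball (0 : E) 1 ⊆ Function.support fun v => m v * φ v := by
        intro v hv
        have h1 : φ v = 1 := φ.one_of_mem_closedBall (Metric.ball_subset_closedBall hv)
        simp only [Function.mem_support, h1, mul_one]
        exact (hmpos v).ne'
      exact lt_of_lt_of_le (Metric.measure_ball_pos volume 0 one_pos) (measure_mono hb)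
    have hFcont : Continuous fun y => (h y).re ^ 4 :=
      (Complex.continuous_re.comp h.continuous).pow 4
    have hFint : Integrable (fun y => (Gconv d m0 α f y).re ^ 4) := by
      rw [hGconv]
      obtain ⟨C, hC0, hC⟩ := h.decay 0 0
      have hbound : ∀ y, ‖h y‖ ≤ C := by
        intro y
        have := hC y
        simpa [norm_iteratedFDeriv_zero] using this
      apply Integrable.mono' ((h.integrable.norm).const_mul (C ^ 3))
      · exact hFcont.aestronglyMeasurable
      · filter_upwards with y
        have h1 : |(h y).re| ≤ ‖h y‖ := Complex.abs_re_le_norm _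
        calc ‖(h y).re ^ 4‖ = |(h y).re| ^ 4 := by
              rw [Real.norm_eq_abs, abs_pow]
          _ ≤ ‖h y‖ ^ 4 := pow_le_pow_left₀ (abs_nonneg _) h1 4
          _ = ‖h y‖ ^ 3 * ‖h y‖ := by ring
          _ ≤ C ^ 3 * ‖h y‖ :=
              mul_le_mul_of_nonneg_right (pow_le_pow_left₀ (norm_nonneg _) (hbound y) 3)
                (norm_nonneg _)
    have hFpos : 0 < ∫ y, (Gconv d m0 α f y).re ^ 4 := by
      have hFint' : Integrable (fun y => (h y).re ^ 4) := by rwa [hGconv] at hFint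
      have : 0 < ∫ y, (h y).re ^ 4 := by
        rw [integral_pos_iff_support_of_nonneg (fun y => by positivity) hFint']
        have hopen : IsOpen {y : E | (h y).re ^ 4 ≠ 0} :=
          isOpen_compl_singleton.preimage hFcont
        have h0mem : (0 : E) ∈ {y : E | (h y).re ^ 4 ≠ 0} := by
          simp only [Set.mem_setOf_eq]
          positivity
        have : Function.support (fun y => (h y).re ^ 4) = {y : E | (h y).re ^ 4 ≠ 0} := rfl
        rw [this]
        exact hopen.measure_pos volume ⟨0, h0mem⟩
      simpa [hGconv] using this
    exact mul_pos (mul_pos hlam hr4) hFpos
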